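/- Let a and b be real numbers with a < b, let n be a natural number, let x_0, …, x_n be pairwise distinct real numbers with Lagrange basis polynomials l_k(x) = Π_{λ ≠ k} (x − x_λ)/(x_k − x_λ), and let E ∈ ℝ^{n+1}. Let M be the matrix with M_{jk} = (b^{j+k+1} − a^{j+k+1})/(j+k+1) and L the matrix with L_{jk} = ∫_a^b x^j l_k(x) dx. If w ∈ ℝ^{n+1} satisfies M w = E and ω ∈ ℝ^{n+1} satisfies L ω = E, then Σ_{k=0}^{n} w_k x^k = Σ_{k=0}^{n} ω_k l_k(x) as polynomials. -/

import Mathlib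

open Polynomial MeasureTheory intervalIntegral

private lemma poly_intervalIntegrable (r : Polynomial ℝ) (j : ℕ) (a b : ℝ) :
    IntervalIntegrable (fun t => t ^ j * r.eval t) volume a b :=
  (Continuous.mul (continuous_pow j) r.continuous).intervalIntegrable a b

private lemma zero_of_moments (a b : ℝ) (hab : a < b) (n : ℕ) (d : Polynomial ℝ)
    (hdeg : d.natDegree ≤ n)
    (h : ∀ j : Fin (n + 1), ∫ t in a..b, t ^ (j : ℕ) * d.eval t = 0) : d = 0 := by
  have hsq : ∫ t in a..b, (d.eval t) ^ 2 = 0 := by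
    have hlt : d.natDegree < n + 1 := Nat.lt_succ_of_le hdeg
    have : ∀ t : ℝ, (d.eval t) ^ 2 =
        ∑ i ∈ Finset.range (n + 1), d.coeff i * (t ^ i * d.eval t) := by
      intro t
      rw [pow_two]
      nth_rewrite 1 [Polynomial.eval_eq_sum_range' hlt t]
      rw [Finset.sum_mul]
      exact Finset.sum_congr rfl fun i _ => by ring
    calc ∫ t in a..b, (d.eval t) ^ 2
        = ∫ t in a..b, ∑ i ∈ Finset.range (n + 1), d.coeff i * (t ^ i * d.eval t) := by
          simp_rw [this]
      _ = ∑ i ∈ Finset.range (n + 1), ∫ t in a..b, d.coeff i * (t ^ i * d.eval t) := by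
          exact intervalIntegral.integral_finset_sum
            (fun i _ => (poly_intervalIntegrable d i a b).const_mul _)
      _ = ∑ i ∈ Finset.range (n + 1), d.coeff i * ∫ t in a..b, t ^ i * d.eval t := by
          simp_rw [intervalIntegral.integral_const_mul]
      _ = 0 := by
          refine Finset.sum_eq_zero fun i hi => ?_
          have hi' : i < n + 1 := Finset.mem_range.mp hi
          have := h ⟨i, hi'⟩
          simp only [Fin.val_mk] at this
          rw [this, mul_zero]
  by_contra hne
  have hroots : Set.Finite {t : ℝ | d.IsRoot t} := Polynomial.finite_setOf_isRoot hne
  have hle : a ≤ b := hab.le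
  have hcont : Continuous fun t : ℝ => (d.eval t) ^ 2 := (d.continuous).pow 2
  have hnonneg : 0 ≤ᶠ[ae (volume.restrict (Set.Ioc a b))] fun t : ℝ => (d.eval t) ^ 2 :=
    Filter.Eventually.of_forall fun t => sq_nonneg _
  have hint : IntegrableOn (fun t : ℝ => (d.eval t) ^ 2) (Set.Ioc a b) volume :=
    hcont.integrableOn_Ioc
  have hzero : (fun t : ℝ => (d.eval t) ^ 2) =ᶠ[ae (volume.restrict (Set.Ioc a b))] 0 := by
    rw [← MeasureTheory.setIntegral_eq_zero_iff_of_nonneg_ae hnonneg hint]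
    rw [← intervalIntegral.integral_of_le hle]
    exact hsq
  have hmeas : volume.restrict (Set.Ioc a b) {t : ℝ | d.IsRoot t}ᶜ = 0 := by
    have := Filter.EventuallyEq.eventually hzero
    rw [Filter.eventually_iff, MeasureTheory.mem_ae_iff] at this
    convert this using 2
    ext t
    simp [Polynomial.IsRoot, pow_eq_zero_iff]
  have hsub : volume ({t : ℝ | d.IsRoot t}ᶜ ∩ Set.Ioc a b) = 0 := by
    rwa [Measure.restrict_apply (hroots.measurableSet.compl)] at hmeas
  have hIoc : volume (Set.Ioc a b) ≤
      volume ({t : ℝ | d.IsRoot t} ∩ Set.Ioc a b) +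
        volume ({t : ℝ | d.IsRoot t}ᶜ ∩ Set.Ioc a b) := by
    refine le_trans (measure_mono ?_) (measure_union_le _ _)
    intro t ht
    by_cases hr : d.IsRoot t
    · exact Or.inl ⟨hr, ht⟩
    · exact Or.inr ⟨hr, ht⟩
  have h1 : volume ({t : ℝ | d.IsRoot t} ∩ Set.Ioc a b) = 0 :=
    measure_mono_null Set.inter_subset_left (hroots.measure_zero volume)
  rw [h1, hsub, add_zero, Real.volume_Ioc] at hIoc
  have h2 : ENNReal.ofReal (b - a) = 0 := le_antisymm hIoc zero_le
  rw [ENNReal.ofReal_eq_zero] at h2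
  linarith

theorem monomial_and_lagrange_reconstructions_agree (a b : ℝ) (hab : a < b) (n : ℕ)
    (x : Fin (n + 1) → ℝ) (hx : Function.Injective x)
    (l : Fin (n + 1) → Polynomial ℝ)
    (hl : ∀ k, l k = ∏ lam ∈ Finset.univ.erase k,
      Polynomial.C ((x k - x lam)⁻¹) * (Polynomial.X - Polynomial.C (x lam)))
    (E w ω : Fin (n + 1) → ℝ)
    (hw : Matrix.mulVec
        (Matrix.of fun j k : Fin (n + 1) =>
          (b ^ ((j : ℕ) + (k : ℕ) + 1) - a ^ ((j : ℕ) + (k : ℕ) + 1)) /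
            (((j : ℕ) + (k : ℕ) + 1 : ℕ) : ℝ)) w = E)
    (hω : Matrix.mulVec
        (Matrix.of fun j k : Fin (n + 1) =>
          ∫ t in a..b, t ^ (j : ℕ) * (l k).eval t) ω = E) :
    ∑ k : Fin (n + 1), Polynomial.C (w k) * Polynomial.X ^ (k : ℕ) =
      ∑ k : Fin (n + 1), Polynomial.C (ω k) * l k := by
  set p : Polynomial ℝ := ∑ k : Fin (n + 1), Polynomial.C (w k) * Polynomial.X ^ (k : ℕ)
    with hp
  set q : Polynomial ℝ := ∑ k : Fin (n + 1), Polynomial.C (ω k) * l k with hq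
  -- degree bounds
  have hln : ∀ k, (l k).natDegree ≤ n := by
    intro k
    rw [hl k]
    refine le_trans (Polynomial.natDegree_prod_le _ _) ?_
    calc ∑ lam ∈ Finset.univ.erase k,
          (Polynomial.C ((x k - x lam)⁻¹) * (Polynomial.X - Polynomial.C (x lam))).natDegree
        ≤ ∑ lam ∈ Finset.univ.erase k, 1 := by
          refine Finset.sum_le_sum fun lam _ => ?_
          exact le_trans (Polynomial.natDegree_C_mul_le _ _)
            (le_of_eq (Polynomial.natDegree_X_sub_C _))
      _ = n := by
          rw [Finset.sum_const, smul_eq_mul, mul_one, Finset.card_erase_of_mem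
            (Finset.mem_univ k), Finset.card_univ, Fintype.card_fin, Nat.add_sub_cancel]
  have hpdeg : p.natDegree ≤ n := by
    refine Polynomial.natDegree_sum_le_of_forall_le _ _ fun k _ => ?_
    refine le_trans (Polynomial.natDegree_C_mul_le _ _) ?_
    rw [Polynomial.natDegree_X_pow]
    exact Fin.is_le k
  have hqdeg : q.natDegree ≤ n := by
    refine Polynomial.natDegree_sum_le_of_forall_le _ _ fun k _ => ?_
    exact le_trans (Polynomial.natDegree_C_mul_le _ _) (hln k)
  -- monomial side
  have hpE : ∀ j : Fin (n + 1), ∫ t in a..b, t ^ (j : ℕ) * p.eval t = E j := by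
    intro j
    have hMj := congrFun hw j
    rw [Matrix.mulVec, dotProduct] at hMj
    calc ∫ t in a..b, t ^ (j : ℕ) * p.eval t
        = ∫ t in a..b, ∑ k : Fin (n + 1), w k * t ^ ((j : ℕ) + (k : ℕ)) := by
          refine intervalIntegral.integral_congr fun t _ => ?_
          rw [hp]
          simp only [Polynomial.eval_finset_sum, Polynomial.eval_mul, Polynomial.eval_C,
            Polynomial.eval_pow, Polynomial.eval_X, Finset.mul_sum]
          exact Finset.sum_congr rfl fun k _ => by rw [pow_add]; ring
      _ = ∑ k : Fin (n + 1), ∫ t in a..b, w k * t ^ ((j : ℕ) + (k : ℕ)) := by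
          exact intervalIntegral.integral_finset_sum
            (fun k _ => ((continuous_pow _).intervalIntegrable a b).const_mul _)
      _ = ∑ k : Fin (n + 1), w k * ((b ^ ((j : ℕ) + (k : ℕ) + 1) -
            a ^ ((j : ℕ) + (k : ℕ) + 1)) / (((j : ℕ) + (k : ℕ) + 1 : ℕ) : ℝ)) := by
          refine Finset.sum_congr rfl fun k _ => ?_
          rw [intervalIntegral.integral_const_mul, integral_pow]
          push_cast
          ring_nf
      _ = E j := by
          rw [← hMj]
          exact Finset.sum_congr rfl fun k _ => by rw [Matrix.of_apply]; ring
  -- Lagrange side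
  have hqE : ∀ j : Fin (n + 1), ∫ t in a..b, t ^ (j : ℕ) * q.eval t = E j := by
    intro j
    have hLj := congrFun hω j
    rw [Matrix.mulVec, dotProduct] at hLj
    calc ∫ t in a..b, t ^ (j : ℕ) * q.eval t
        = ∫ t in a..b, ∑ k : Fin (n + 1), ω k * (t ^ (j : ℕ) * (l k).eval t) := by
          refine intervalIntegral.integral_congr fun t _ => ?_
          rw [hq]
          simp only [Polynomial.eval_finset_sum, Polynomial.eval_mul, Polynomial.eval_C,
            Finset.mul_sum]
          exact Finset.sum_congr rfl fun k _ => by ring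
      _ = ∑ k : Fin (n + 1), ∫ t in a..b, ω k * (t ^ (j : ℕ) * (l k).eval t) := by
          exact intervalIntegral.integral_finset_sum
            (fun k _ => (poly_intervalIntegrable (l k) _ a b).const_mul _)
      _ = ∑ k : Fin (n + 1), ω k * ∫ t in a..b, t ^ (j : ℕ) * (l k).eval t := by
          simp_rw [intervalIntegral.integral_const_mul]
      _ = E j := by
          rw [← hLj]
          exact Finset.sum_congr rfl fun k _ => by rw [Matrix.of_apply]; ring
  -- difference has vanishing moments
  have hd : ∀ j : Fin (n + 1), ∫ t in a..b, t ^ (j : ℕ) * (p - q).eval t = 0 := by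
    intro j
    have : ∫ t in a..b, t ^ (j : ℕ) * (p - q).eval t =
        (∫ t in a..b, t ^ (j : ℕ) * p.eval t) - ∫ t in a..b, t ^ (j : ℕ) * q.eval t := by
      rw [← intervalIntegral.integral_sub (poly_intervalIntegrable p _ a b)
        (poly_intervalIntegrable q _ a b)]
      refine intervalIntegral.integral_congr fun t _ => ?_
      simp [mul_sub]
    rw [this, hpE j, hqE j, sub_self]
  have hdeg : (p - q).natDegree ≤ n :=
    le_trans (Polynomial.natDegree_sub_le _ _) (max_le hpdeg hqdeg)
  have := zero_of_moments a b hab n (p - q) hdeg hd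
  have := sub_eq_zero.mp this
  exact this
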